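/- Let μ ≥ 2 be an even integer, ζ > 0, V > 0. Let F_Y be the CDF of the distribution with density f_Y(y) = (1/π)·√(V²/(ζy − V²y²)) on (0, ζ/V²), and let F_α be the CDF of the distribution with density f_α(α) = (μ/(2π))·√(V²/(ζα − V²α²)) on (cos²(π/μ)·ζ/V², ζ/V²). Then F_α(Y) ≤ F_Y(Y) for all Y ∈ ℝ (first-order stochastic dominance of the signal power over the per-user interference power), and if μ ≥ 4 the inequality is strict for some Y ∈ ℝ. -/

import Mathlib

open Real MeasureTheory

/-- Density of the per-user CUMA interference power (Corollary 1):
`(1/π)·√(V²/(ζy − V²y²))` on `(0, ζ/V²)` and `0` otherwise. -/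
noncomputable def interferenceDensity (ζ V y : ℝ) : ℝ :=
  if y ∈ Set.Ioo 0 (ζ / V ^ 2)
  then 1 / π * Real.sqrt (V ^ 2 / (ζ * y - V ^ 2 * y ^ 2))
  else 0

/-- Density of the received CUMA signal power (Theorem 2):
`(μ/(2π))·√(V²/(ζα − V²α²))` on `(cos²(π/μ)ζ/V², ζ/V²)` and `0` otherwise. -/
noncomputable def signalDensity (μ : ℕ) (ζ V α : ℝ) : ℝ :=
  if α ∈ Set.Ioo (Real.cos (π / μ) ^ 2 * ζ / V ^ 2) (ζ / V ^ 2)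
  then μ / (2 * π) * Real.sqrt (V ^ 2 / (ζ * α - V ^ 2 * α ^ 2))
  else 0

/-- The (unnormalised) arcsine-type density. -/
noncomputable def wfun (ζ V y : ℝ) : ℝ := Real.sqrt (V ^ 2 / (ζ * y - V ^ 2 * y ^ 2))

/-- Antiderivative of `wfun`. -/
noncomputable def Ffun (ζ V y : ℝ) : ℝ := Real.arccos (1 - 2 * V ^ 2 / ζ * y)

lemma Ffun_cont (ζ V : ℝ) : Continuous (Ffun ζ V) :=
  Real.continuous_arccos.comp (by continuity)

lemma Ffun_deriv {ζ V : ℝ} (hζ : 0 < ζ) (hV : 0 < V) {y : ℝ}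
    (hy : y ∈ Set.Ioo 0 (ζ / V ^ 2)) : HasDerivAt (Ffun ζ V) (wfun ζ V y) y := by
  obtain ⟨hy0, hyb⟩ := hy
  have hζ0 : ζ ≠ 0 := hζ.ne'
  have hV2 : (0 : ℝ) < V ^ 2 := by positivity
  have hyζ : V ^ 2 * y < ζ := by
    have := (lt_div_iff₀ hV2).mp hyb; linarith
  have hD : 0 < ζ * y - V ^ 2 * y ^ 2 := by nlinarith
  have hult : 2 * V ^ 2 / ζ * y < 2 := by
    rw [div_mul_eq_mul_div, div_lt_iff₀ hζ]; nlinarith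
  have hupos : 0 < 2 * V ^ 2 / ζ * y := by positivity
  have hu1 : 1 - 2 * V ^ 2 / ζ * y ≠ 1 := by intro h; nlinarith
  have hum1 : 1 - 2 * V ^ 2 / ζ * y ≠ -1 := by intro h; nlinarith
  have hinner : HasDerivAt (fun x : ℝ => 1 - 2 * V ^ 2 / ζ * x) (-(2 * V ^ 2 / ζ)) y := by
    simpa using ((hasDerivAt_id y).const_mul (2 * V ^ 2 / ζ)).const_sub 1
  have hchain := (Real.hasDerivAt_arccos hum1 hu1).comp y hinner
  have hsq : Real.sqrt (1 - (1 - 2 * V ^ 2 / ζ * y) ^ 2)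
      = 2 * V / ζ * Real.sqrt (ζ * y - V ^ 2 * y ^ 2) := by
    rw [show 1 - (1 - 2 * V ^ 2 / ζ * y) ^ 2
        = (2 * V / ζ) ^ 2 * (ζ * y - V ^ 2 * y ^ 2) by field_simp; ring]
    rw [Real.sqrt_mul (by positivity), Real.sqrt_sq (by positivity)]
  have hw : wfun ζ V y = V / Real.sqrt (ζ * y - V ^ 2 * y ^ 2) := by
    rw [wfun, Real.sqrt_div (by positivity), Real.sqrt_sq hV.le]
  have hsD : 0 < Real.sqrt (ζ * y - V ^ 2 * y ^ 2) := Real.sqrt_pos.mpr hD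
  refine (hchain : HasDerivAt (Ffun ζ V) _ y).congr_deriv ?_
  rw [hsq, hw]
  field_simp

lemma integral_wfun {ζ V : ℝ} (hζ : 0 < ζ) (hV : 0 < V) {a₁ a₂ : ℝ} (h0 : 0 ≤ a₁)
    (h12 : a₁ ≤ a₂) (h2b : a₂ ≤ ζ / V ^ 2) :
    ∫ y in Set.Ioo a₁ a₂, wfun ζ V y = Ffun ζ V a₂ - Ffun ζ V a₁ := by
  have hsub : Set.Ioo a₁ a₂ ⊆ Set.Ioo 0 (ζ / V ^ 2) := fun y hy =>
    ⟨lt_of_le_of_lt h0 hy.1, lt_of_lt_of_le hy.2 h2b⟩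
  have hint : IntervalIntegrable (wfun ζ V) volume a₁ a₂ := by
    apply intervalIntegral.intervalIntegrable_deriv_of_nonneg ((Ffun_cont ζ V).continuousOn)
    · intro x hx
      rw [min_eq_left h12, max_eq_right h12] at hx
      exact Ffun_deriv hζ hV (hsub hx)
    · intro x _; exact Real.sqrt_nonneg _
  rw [← MeasureTheory.integral_Ioc_eq_integral_Ioo, ← intervalIntegral.integral_of_le h12]
  exact intervalIntegral.integral_eq_sub_of_hasDerivAt_of_le h12 (Ffun_cont ζ V).continuousOn
    (fun x hx => Ffun_deriv hζ hV (hsub hx)) hint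

lemma cdf_eval {ζ V : ℝ} (hζ : 0 < ζ) (hV : 0 < V) {l k Y : ℝ} (hl : 0 ≤ l)
    (hlb : l ≤ ζ / V ^ 2) (hY : l < Y) :
    ∫ y in Set.Iic Y, Set.indicator (Set.Ioo l (ζ / V ^ 2)) (fun y => k * wfun ζ V y) y
      = k * (Ffun ζ V (min Y (ζ / V ^ 2)) - Ffun ζ V l) := by
  rw [MeasureTheory.setIntegral_indicator measurableSet_Ioo]
  rcases le_or_gt (ζ / V ^ 2) Y with h | h
  · have hset : Set.Iic Y ∩ Set.Ioo l (ζ / V ^ 2) = Set.Ioo l (ζ / V ^ 2) :=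
      Set.inter_eq_right.mpr fun y hy => le_of_lt (lt_of_lt_of_le hy.2 h)
    rw [hset, min_eq_right h, integral_const_mul,
      integral_wfun hζ hV hl hlb le_rfl]
  · have hset : Set.Iic Y ∩ Set.Ioo l (ζ / V ^ 2) = Set.Ioc l Y := by
      ext y
      simp only [Set.mem_inter_iff, Set.mem_Iic, Set.mem_Ioo, Set.mem_Ioc]
      constructor
      · rintro ⟨h1, h2, _⟩; exact ⟨h2, h1⟩
      · rintro ⟨h1, h2⟩; exact ⟨h2, h1, lt_of_le_of_lt h2 h⟩
    rw [hset, MeasureTheory.integral_Ioc_eq_integral_Ioo, integral_const_mul,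
      integral_wfun hζ hV hl hY.le h.le, min_eq_left h.le]

lemma Ffun_zero {ζ V : ℝ} : Ffun ζ V 0 = 0 := by
  simp [Ffun]

lemma Ffun_le_pi {ζ V y : ℝ} : Ffun ζ V y ≤ π := Real.arccos_le_pi _

lemma Ffun_cpt {ζ V : ℝ} (μ : ℕ) (hζ : 0 < ζ) (hV : 0 < V) (hμ2 : 2 ≤ μ) :
    Ffun ζ V (Real.cos (π / μ) ^ 2 * ζ / V ^ 2) = π - 2 * (π / μ) := by
  have hζ0 : ζ ≠ 0 := hζ.ne'
  have hV0 : V ≠ 0 := hV.ne'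
  have hμR : (2 : ℝ) ≤ μ := by exact_mod_cast hμ2
  have hμ0 : (0 : ℝ) < μ := by linarith
  have h1 : 1 - 2 * V ^ 2 / ζ * (Real.cos (π / μ) ^ 2 * ζ / V ^ 2)
      = Real.cos (π - 2 * (π / μ)) := by
    rw [Real.cos_pi_sub, Real.cos_two_mul]
    field_simp
    ring
  have hle : 2 * (π / (μ : ℝ)) ≤ π := by
    rw [← mul_div_assoc, div_le_iff₀ hμ0]
    nlinarith [Real.pi_pos]
  rw [Ffun, h1, Real.arccos_cos (by linarith) (by linarith [Real.pi_pos, div_pos Real.pi_pos hμ0])]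

lemma signal_indicator (μ : ℕ) (ζ V : ℝ) : signalDensity μ ζ V
    = Set.indicator (Set.Ioo (Real.cos (π / μ) ^ 2 * ζ / V ^ 2) (ζ / V ^ 2))
      (fun y => μ / (2 * π) * wfun ζ V y) := by
  funext y
  simp [signalDensity, Set.indicator_apply, wfun]

lemma interference_indicator (ζ V : ℝ) : interferenceDensity ζ V
    = Set.indicator (Set.Ioo 0 (ζ / V ^ 2)) (fun y => 1 / π * wfun ζ V y) := by
  funext y
  simp [interferenceDensity, Set.indicator_apply, wfun]

/-- Corollary 7: the CUMA signal power first-order stochastically dominates the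
per-user interference power: its CDF is everywhere below that of the interference
power, strictly at some point when `μ ≥ 4`. -/
theorem cuma_signal_fosd_interference (μ : ℕ) (hμ2 : 2 ≤ μ) (hμe : Even μ)
    (ζ V : ℝ) (hζ : 0 < ζ) (hV : 0 < V) :
    (∀ Y : ℝ, (∫ y in Set.Iic Y, signalDensity μ ζ V y)
        ≤ ∫ y in Set.Iic Y, interferenceDensity ζ V y) ∧
    (4 ≤ μ → ∃ Y : ℝ, (∫ y in Set.Iic Y, signalDensity μ ζ V y)
        < ∫ y in Set.Iic Y, interferenceDensity ζ V y) := by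
  have hV2 : (0 : ℝ) < V ^ 2 := by positivity
  have hμR : (2 : ℝ) ≤ μ := by exact_mod_cast hμ2
  have hμ0 : (0 : ℝ) < μ := by linarith
  have hπμ0 : 0 < π / μ := div_pos Real.pi_pos hμ0
  have hπμ : π / μ ≤ π / 2 := by
    apply div_le_div_of_nonneg_left Real.pi_pos.le (by norm_num) hμR
  have hcosnn : 0 ≤ Real.cos (π / μ) :=
    Real.cos_nonneg_of_mem_Icc ⟨by linarith, hπμ⟩
  have hsin : 0 < Real.sin (π / μ) :=
    Real.sin_pos_of_pos_of_lt_pi hπμ0 (by linarith [Real.pi_pos])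
  have hcos1 : Real.cos (π / μ) ^ 2 < 1 := by
    nlinarith [Real.sin_sq_add_cos_sq (π / μ)]
  have hc0 : 0 ≤ Real.cos (π / μ) ^ 2 * ζ / V ^ 2 := by positivity
  have hcb : Real.cos (π / μ) ^ 2 * ζ / V ^ 2 < ζ / V ^ 2 := by
    apply div_lt_div_of_pos_right ?_ hV2
    nlinarith
  -- signal CDF when Y ≤ c
  have hSzero : ∀ Y : ℝ, Y ≤ Real.cos (π / μ) ^ 2 * ζ / V ^ 2 →
      (∫ y in Set.Iic Y, signalDensity μ ζ V y) = 0 := by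
    intro Y hY
    apply MeasureTheory.setIntegral_eq_zero_of_forall_eq_zero
    intro y hy
    rw [signalDensity, if_neg]
    rintro ⟨h1, -⟩
    simp only [Set.mem_Iic] at hy
    linarith
  -- signal CDF when Y > c
  have hSeval : ∀ Y : ℝ, Real.cos (π / μ) ^ 2 * ζ / V ^ 2 < Y →
      (∫ y in Set.Iic Y, signalDensity μ ζ V y)
        = μ / (2 * π) * (Ffun ζ V (min Y (ζ / V ^ 2))
            - Ffun ζ V (Real.cos (π / μ) ^ 2 * ζ / V ^ 2)) := by
    intro Y hY
    rw [signal_indicator]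
    exact cdf_eval hζ hV hc0 hcb.le hY
  -- interference CDF when Y > 0
  have hIeval : ∀ Y : ℝ, 0 < Y →
      (∫ y in Set.Iic Y, interferenceDensity ζ V y)
        = 1 / π * Ffun ζ V (min Y (ζ / V ^ 2)) := by
    intro Y hY
    rw [interference_indicator]
    rw [cdf_eval hζ hV le_rfl (by positivity) hY, Ffun_zero, sub_zero]
  have hFc := Ffun_cpt (ζ := ζ) (V := V) μ hζ hV hμ2
  constructor
  · intro Y
    rcases le_or_gt Y (Real.cos (π / μ) ^ 2 * ζ / V ^ 2) with hYc | hYc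
    · rw [hSzero Y hYc]
      apply MeasureTheory.setIntegral_nonneg measurableSet_Iic
      intro y _
      rw [interferenceDensity]
      split
      · positivity
      · exact le_rfl
    · rw [hSeval Y hYc, hIeval Y (lt_of_le_of_lt hc0 hYc), hFc]
      have hFm : Ffun ζ V (min Y (ζ / V ^ 2)) ≤ π := Ffun_le_pi
      have hcanc : (μ : ℝ) * (π / μ) = π := by field_simp
      rw [div_mul_eq_mul_div, div_mul_eq_mul_div, div_le_div_iff₀ (by positivity) Real.pi_pos]
      nlinarith [mul_nonneg (mul_nonneg (sub_nonneg.mpr hμR) (sub_nonneg.mpr hFm))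
        Real.pi_pos.le, Real.pi_pos]
  · intro hμ4
    have hμ4R : (4 : ℝ) ≤ μ := by exact_mod_cast hμ4
    have hπμ4 : π / μ < π / 2 := by
      apply div_lt_div_of_pos_left Real.pi_pos (by norm_num) (by linarith)
    have hcpos : 0 < Real.cos (π / μ) :=
      Real.cos_pos_of_mem_Ioo ⟨by linarith, hπμ4⟩
    have hcpos2 : 0 < Real.cos (π / μ) ^ 2 * ζ / V ^ 2 := by positivity
    refine ⟨Real.cos (π / μ) ^ 2 * ζ / V ^ 2, ?_⟩
    rw [hSzero _ le_rfl, hIeval _ hcpos2, min_eq_left hcb.le, hFc]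
    have hπμle : π / (μ : ℝ) ≤ π / 4 := by
      apply div_le_div_of_nonneg_left Real.pi_pos.le (by norm_num) hμ4R
    have : 2 * (π / (μ : ℝ)) < π := by linarith [Real.pi_pos]
    exact mul_pos (by positivity) (by linarith)
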